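/- Let T be a rank-2 lattice (free Z-module of rank 2 with a symmetric bilinear form) with an isometry τ of order 3 acting freely on T \ {0} whose minimal polynomial is x²+x+1. Then there is a basis e₁, e₂ of T with τ(e₁) = e₂, τ(e₂) = -(e₁+e₂), and the Gram matrix is m·[[2,-1],[-1,2]] for some integer m. -/

import Mathlib

lemma quad_rep_one : ∀ n : ℕ, ∀ p q r : ℤ, p.natAbs = n → 0 < p → q^2 - 4*p*r = -3 →
    ∃ x y : ℤ, p*x^2 + q*x*y + r*y^2 = 1 := by
  intro n
  induction n using Nat.strong_induction_on with
  | _ n ih =>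
    intro p q r hn hp hd
    set k : ℤ := -((q + p) / (2*p)) with hk
    have h2p : 0 < 2*p := by linarith
    have hdiv := Int.mul_ediv_add_emod (q+p) (2*p)
    have hmod0 : 0 ≤ (q+p) % (2*p) := Int.emod_nonneg _ (by positivity)
    have hmod1 : (q+p) % (2*p) < 2*p := Int.emod_lt_of_pos _ h2p
    have hqq : q + 2*p*k = (q+p) % (2*p) - p := by rw [hk]; linarith
    have hub : q + 2*p*k < p := by rw [hqq]; linarith
    have hlb : -p ≤ q + 2*p*k := by rw [hqq]; linarith
    have hq'd : (q + 2*p*k)^2 - 4*p*(p*k^2 + q*k + r) = -3 := by linear_combination hd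
    have hr'pos : 0 < p*k^2 + q*k + r := by nlinarith [sq_nonneg (q + 2*p*k)]
    by_cases hcase : p*k^2 + q*k + r < p
    · obtain ⟨x, y, hxy⟩ := ih (p*k^2 + q*k + r).natAbs (by omega) _ (-(q + 2*p*k)) p rfl
        hr'pos (by linear_combination hq'd)
      exact ⟨y - k*x, -x, by linear_combination hxy⟩
    · push_neg at hcase
      have hsq : (q + 2*p*k)^2 ≤ p^2 := by nlinarith
      have hp1 : p ≤ 1 := by nlinarith
      have : p = 1 := by omega
      exact ⟨1, 0, by simp [this]⟩


/-- Let `T` be a rank-`2` lattice (a free `ℤ`-module of rank `2` with a symmetric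
bilinear form `B`) and `τ` an isometry of `T` of order `3` acting freely on `T \ {0}`
with minimal polynomial `x² + x + 1` (i.e. `τ² + τ + 1 = 0`).  Then there is a basis
`e₁, e₂` of `T` with `τ(e₁) = e₂` and `τ(e₂) = -(e₁ + e₂)`, and with respect to this
basis the Gram matrix is `m·[[2, -1], [-1, 2]]` for some integer `m`. -/
theorem lattice_rank_two_order_three_isometry
    (T : Type*) [AddCommGroup T] [Module ℤ T] [Module.Free ℤ T]
    (hrk : Module.finrank ℤ T = 2)
    (B : LinearMap.BilinForm ℤ T) (hsymm : ∀ x y, B x y = B y x)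
    (τ : T ≃ₗ[ℤ] T)
    (hisom : ∀ x y, B (τ x) (τ y) = B x y)
    (horder : orderOf τ = 3)
    (hfree : ∀ x : T, x ≠ 0 → τ x ≠ x)
    (hmin : ∀ x : T, τ (τ x) + τ x + x = 0) :
    ∃ b : Module.Basis (Fin 2) ℤ T, τ (b 0) = b 1 ∧ τ (b 1) = -(b 0 + b 1) ∧
      ∃ m : ℤ, B (b 0) (b 0) = 2 * m ∧ B (b 0) (b 1) = -m ∧ B (b 1) (b 1) = 2 * m := by
  clear horder hfree
  haveI := AddCommGroup.uniqueIntModule (M := T)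
  obtain rfl : ‹Module ℤ T› = AddCommGroup.toIntModule T := Subsingleton.elim _ _
  have hfin : Module.Finite ℤ T := Module.finite_of_finrank_pos (by omega)
  let b : Module.Basis (Fin 2) ℤ T := Module.finBasisOfFinrankEq ℤ T hrk
  have hb0 : τ (b 0) = b.repr (τ (b 0)) 0 • b 0 + b.repr (τ (b 0)) 1 • b 1 := by
    conv_lhs => rw [← b.sum_repr (τ (b 0))]
    rw [Fin.sum_univ_two]
  have hb1 : τ (b 1) = b.repr (τ (b 1)) 0 • b 0 + b.repr (τ (b 1)) 1 • b 1 := by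
    conv_lhs => rw [← b.sum_repr (τ (b 1))]
    rw [Fin.sum_univ_two]
  set a : ℤ := b.repr (τ (b 0)) 0 with ha
  set c : ℤ := b.repr (τ (b 0)) 1 with hc
  set bb : ℤ := b.repr (τ (b 1)) 0 with hbb
  set d : ℤ := b.repr (τ (b 1)) 1 with hd
  have key : ∀ u v : ℤ, u • b 0 + v • b 1 = 0 → u = 0 ∧ v = 0 := by
    intro u v huv
    have h0 := congrArg (fun z => b.repr z 0) huv
    have h1 := congrArg (fun z => b.repr z 1) huv
    simp [Finsupp.single_apply] at h0 h1
    exact ⟨h0, h1⟩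
  have e0 := hmin (b 0)
  rw [hb0] at e0
  have e0' : (a * a + bb * c + a + 1) • b 0 + (c * a + d * c + c) • b 1 = 0 := by
    rw [map_add, map_smul, map_smul, hb0, hb1] at e0
    rw [← e0]
    module
  have e1 := hmin (b 1)
  rw [hb1] at e1
  have e1' : (a * bb + bb * d + bb) • b 0 + (c * bb + d * d + d + 1) • b 1 = 0 := by
    rw [map_add, map_smul, map_smul, hb0, hb1] at e1
    rw [← e1]
    module
  obtain ⟨E1, E2⟩ := key _ _ e0'
  obtain ⟨E3, E4⟩ := key _ _ e1'
  have hcbb : c ≠ 0 ∨ bb ≠ 0 := by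
    by_contra h
    push_neg at h
    obtain ⟨h1, h2⟩ := h
    rw [h1, h2] at E1
    nlinarith [sq_nonneg (2 * a + 1)]
  have htr : a + d = -1 := by
    rcases hcbb with h | h
    · have hz : c * (a + d + 1) = 0 := by linear_combination E2
      rcases mul_eq_zero.mp hz with h' | h'
      · exact absurd h' h
      · linarith
    · have hz : bb * (a + d + 1) = 0 := by linear_combination E3
      rcases mul_eq_zero.mp hz with h' | h'
      · exact absurd h' h
      · linarith
  have hdet2 : a * d - bb * c = 1 := by
    have hda : d = -1 - a := by linarith
    rw [hda]; linear_combination -E1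
  have hdisc : (d - a) ^ 2 + 4 * bb * c = -3 := by nlinarith [htr, hdet2]
  have hcne : c ≠ 0 := by
    intro h
    rw [h] at hdisc
    nlinarith [sq_nonneg (d - a)]
  obtain ⟨x, y, ε, hεunit, hxy⟩ :
      ∃ x y ε : ℤ, IsUnit ε ∧ c * x ^ 2 + (d - a) * x * y + -bb * y ^ 2 = ε := by
    rcases lt_or_gt_of_ne hcne with hneg | hpos
    · obtain ⟨x, y, hxy⟩ := quad_rep_one (-c).natAbs (-c) (-(d - a)) bb rfl (by linarith)
        (by linear_combination hdisc)
      exact ⟨x, y, -1, isUnit_one.neg, by linear_combination -hxy⟩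
    · obtain ⟨x, y, hxy⟩ := quad_rep_one c.natAbs c (d - a) (-bb) rfl hpos
        (by linear_combination hdisc)
      exact ⟨x, y, 1, isUnit_one, hxy⟩
  set P : Matrix (Fin 2) (Fin 2) ℤ := !![x, a * x + bb * y; y, c * x + d * y] with hP
  have hPdet : IsUnit P.det := by
    rw [hP, Matrix.det_fin_two_of]
    convert hεunit using 1
    linear_combination hxy
  set b' : Module.Basis (Fin 2) ℤ T := b.map (P.toLinearEquiv b hPdet) with hb'
  have hb'0 : b' 0 = x • b 0 + y • b 1 := by
    rw [hb', Module.Basis.map_apply, Matrix.toLinearEquiv_apply, Matrix.toLin_self, Fin.sum_univ_two]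
    rw [hP]
    norm_num
  have hb'1 : b' 1 = (a * x + bb * y) • b 0 + (c * x + d * y) • b 1 := by
    rw [hb', Module.Basis.map_apply, Matrix.toLinearEquiv_apply, Matrix.toLin_self, Fin.sum_univ_two]
    rw [hP]
    norm_num
  have hτ0 : τ (b' 0) = b' 1 := by
    rw [hb'0, hb'1, map_add, map_smul, map_smul, hb0, hb1]
    module
  have hτ1 : τ (b' 1) = -(b' 0 + b' 1) := by
    have hm := hmin (b' 0)
    rw [hτ0] at hm
    linear_combination (norm := module) hm
  have h1 : B (b' 1) (b' 1) = B (b' 0) (b' 0) := by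
    rw [← hτ0]; exact hisom _ _
  have h2 : B (b' 0) (b' 1) = B (b' 1) (-(b' 0 + b' 1)) := by
    conv_lhs => rw [← hisom (b' 0) (b' 1), hτ0, hτ1]
  rw [map_neg, map_add, hsymm (b' 1) (b' 0)] at h2
  exact ⟨b', hτ0, hτ1, -(B (b' 0) (b' 1)), by linarith, by ring, by linarith⟩
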